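/- Suppose there exists a covering code C ⊆ F₂ⁿ with |C| ≤ 2^t and covering radius R = ⌊(n−k−1)/2⌋ (every point of F₂ⁿ is within Hamming distance R of some codeword). Then there exist functions h : F₂ⁿ → Fin 2^t and φ : Fin 2^t × F₂ⁿ → Bool such that for all x, y ∈ F₂ⁿ: if the Hamming weight of x⊕y is at most k then φ(h(x), y) = false, and if x⊕y is the all-ones vector then φ(h(x), y) = true. -/

import Mathlib

lemma flip_norm (n : ℕ) (v : Fin n → ZMod 2) :
    hammingNorm (v + fun _ => 1) = n - hammingNorm v := by
  classical
  have h1 : hammingNorm (v + fun _ => 1)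
      = (Finset.univ.filter (fun i => v i + 1 ≠ 0)).card := by
    simp [hammingNorm, hammingDist]
  have h2 : hammingNorm v = (Finset.univ.filter (fun i => v i ≠ 0)).card := by
    simp [hammingNorm, hammingDist]
  have key : ∀ a : ZMod 2, (a + 1 ≠ 0) ↔ ¬ (a ≠ 0) := by decide
  rw [h1, h2]
  have : (Finset.univ.filter (fun i => v i + 1 ≠ 0))
      = (Finset.univ.filter (fun i => v i ≠ 0))ᶜ := by
    ext i; simp [key]
  rw [this, Finset.card_compl]
  simp

theorem stmt_8 (n k t : ℕ) (hk : k < n)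
    (C : Finset (Fin n → ZMod 2)) (hC : C.card ≤ 2 ^ t)
    (hcov : ∀ x : Fin n → ZMod 2, ∃ c ∈ C, hammingDist x c ≤ (n - k - 1) / 2) :
    ∃ (h : (Fin n → ZMod 2) → Fin (2 ^ t))
      (φ : Fin (2 ^ t) → (Fin n → ZMod 2) → Bool),
      ∀ x y : Fin n → ZMod 2,
        (hammingNorm (x + y) ≤ k → φ (h x) y = false) ∧
        (x + y = (fun _ => 1) → φ (h x) y = true) := by
  classical
  obtain ⟨c0, hc0, -⟩ := hcov 0
  haveI : Nonempty {c // c ∈ C} := ⟨⟨c0, hc0⟩⟩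
  have hcard : Fintype.card {c // c ∈ C} ≤ Fintype.card (Fin (2 ^ t)) := by
    simpa using hC
  obtain ⟨f⟩ := Function.Embedding.nonempty_of_card_le hcard
  set g : Fin (2 ^ t) → (Fin n → ZMod 2) :=
    fun i => (Function.invFun f i : {c // c ∈ C}).1 with hgdef
  have hg : ∀ c : {c // c ∈ C}, g (f c) = c := fun c => by
    rw [hgdef]
    simp [Function.leftInverse_invFun f.injective c]
  choose near hnear hdist using hcov
  refine ⟨fun x => f ⟨near x, hnear x⟩,
    fun i y => decide (hammingDist (g i) (y + fun _ => 1) ≤ (n - k - 1) / 2),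
    fun x y => ⟨?_, ?_⟩⟩
  · intro hw
    beta_reduce
    rw [hg ⟨near x, hnear x⟩]
    simp only [decide_eq_false_iff_not]
    intro hle
    have h1 : hammingDist x (y + fun _ => 1)
        ≤ hammingDist x (near x) + hammingDist (near x) (y + fun _ => 1) :=
      hammingDist_triangle _ _ _
    have h2 : hammingDist x (y + fun _ => 1) ≤ (n - k - 1) / 2 + (n - k - 1) / 2 :=
      h1.trans (Nat.add_le_add (hdist x) hle)
    have h3 : hammingDist x (y + fun _ => 1) = hammingNorm ((x + y) + fun _ => 1) := by
      rw [hammingDist_eq_hammingNorm]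
      congr 1
      funext i
      have : ∀ a b : ZMod 2, a - (b + 1) = a + b + 1 := by decide
      simp [add_assoc]
    rw [h3, flip_norm] at h2
    have h4 : n - k ≤ n - hammingNorm (x + y) := by omega
    have h5 : (n - k - 1) / 2 + (n - k - 1) / 2 ≤ n - k - 1 := by omega
    omega
  · intro hxy
    beta_reduce
    rw [hg ⟨near x, hnear x⟩]
    simp only [decide_eq_true_eq]
    have : y + (fun _ => 1 : Fin n → ZMod 2) = x := by
      funext i
      have hx := congrFun hxy i
      have : ∀ a b : ZMod 2, a + b = 1 → b + 1 = a := by decide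
      exact this (x i) (y i) hx
    rw [this]
    have := hdist x
    rwa [hammingDist_comm]
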